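/- Let e = 2m with m ≥ 1 and let α ∈ F_q with α ≠ 0. The map X ↦ α^{p^l} X^{p^{2l}} + α X is a permutation of F_q if and only if either e/s is odd, or e/s is even and α^{(q-1)/(p^s+1)} ≠ (-1)^{m/s} (equality in F_q). -/

import Mathlib

open scoped BigOperators

noncomputable section

/-- The primitive `p`-th root of unity `ζ_p = exp(2πi/p)`. -/
def zetaP (p : ℕ) : ℂ := Complex.exp (2 * Real.pi * Complex.I / p)

/-- The absolute trace map from `F_q = GF(p^e)` onto `F_p`. -/
def tr (p e : ℕ) [Fact p.Prime] (x : GaloisField p e) : ZMod p :=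
  Algebra.trace (ZMod p) (GaloisField p e) x

/-- The Weil sum `S(α, β) = Σ_{x ∈ F_q} ζ_p^{Tr(α x^{p^l+1} + β x)}`. -/
def weilSum (p e l : ℕ) [Fact p.Prime] (α β : GaloisField p e) : ℂ :=
  letI : Fintype (GaloisField p e) := Fintype.ofFinite _
  ∑ x : GaloisField p e, zetaP p ^ (tr p e (α * x ^ (p ^ l + 1) + β * x)).val

/- The quadratic character `η` of `F_p`, integer-valued:
`η(0) = 0`, `η(x) = 1` for nonzero squares, `η(x) = -1` for nonsquares. -/
open Classical in
def eta (p : ℕ) (x : ZMod p) : ℤ :=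
  if x = 0 then 0 else if IsSquare x then 1 else -1

/- The cyclotomic classes of order 2 in `F_p^*`: `cyc p 0` is the set of nonzero
squares `C_0^{(2,p)}`, and `cyc p 1` is the set of nonsquares `C_1^{(2,p)}`. -/
open Classical in
def cyc (p : ℕ) [Fact p.Prime] (i : ℕ) : Finset (ZMod p) :=
  Finset.univ.filter (fun x => x ≠ 0 ∧ (if i = 0 then IsSquare x else ¬ IsSquare x))

/-- `ψ_3(a) = ((p-1)/2) p^{e-3} Σ_{z1 ∈ F_p^*} ζ_p^{-z1} Σ_{z3 ∈ F_p^*} S(z1, a z3)`. -/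
def psi3 (p e l : ℕ) [Fact p.Prime] (a : GaloisField p e) : ℂ :=
  ((p : ℂ) - 1) / 2 * (p : ℂ) ^ ((e : ℤ) - 3) *
    ∑ z1 ∈ ({0}ᶜ : Finset (ZMod p)), zetaP p ^ (-z1).val *
      ∑ z3 ∈ ({0}ᶜ : Finset (ZMod p)),
        weilSum p e l (algebraMap (ZMod p) (GaloisField p e) z1)
          (a * algebraMap (ZMod p) (GaloisField p e) z3)

/-- `ψ_4^{(i)}(a, b) = p^{e-3} Σ_{c ∈ C_i} Σ_{z1 ∈ F_p^*} ζ_p^{-z1}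
      Σ_{z2 ∈ F_p^*} ζ_p^{-c z2} S(z1, -a b⁻¹ z2)`, for `b ∈ F_p^*`. -/
def psi4 (p e l : ℕ) [Fact p.Prime] (i : ℕ) (a : GaloisField p e) (b : ZMod p) : ℂ :=
  (p : ℂ) ^ ((e : ℤ) - 3) *
    ∑ c ∈ cyc p i, ∑ z1 ∈ ({0}ᶜ : Finset (ZMod p)), zetaP p ^ (-z1).val *
      ∑ z2 ∈ ({0}ᶜ : Finset (ZMod p)), zetaP p ^ (-(c * z2)).val *
        weilSum p e l (algebraMap (ZMod p) (GaloisField p e) z1)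
          (-a * algebraMap (ZMod p) (GaloisField p e) (b⁻¹ * z2))

/-- `T_i(a,b) = |{(x1,x2) ∈ F_q² : Tr(x1^{p^l+1}) = 1, Tr(x2) ∈ C_i, Tr(a x1 + b x2) = 0}|`. -/
def Tcount (p e l : ℕ) [Fact p.Prime] (i : ℕ) (a b : GaloisField p e) : ℕ :=
  Nat.card {x : GaloisField p e × GaloisField p e //
    tr p e (x.1 ^ (p ^ l + 1)) = 1 ∧ tr p e x.2 ∈ cyc p i ∧ tr p e (a * x.1 + b * x.2) = 0}

/-- The defining set `D_i = {(x1,x2) ∈ F_q² : Tr(x1^{p^l+1}) = 1, Tr(x2) ∈ C_i^{(2,p)}}`. -/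
def Dset (p e l : ℕ) [Fact p.Prime] (i : ℕ) : Set (GaloisField p e × GaloisField p e) :=
  {x | tr p e (x.1 ^ (p ^ l + 1)) = 1 ∧ tr p e x.2 ∈ cyc p i}

/-- The codeword of `C_{D_i}` indexed by `(a, b) ∈ F_q²`:
the vector `(Tr(a x1 + b x2))_{(x1,x2) ∈ D_i}`. -/
def codeword (p e l : ℕ) [Fact p.Prime] (i : ℕ) (a b : GaloisField p e) :
    Dset p e l i → ZMod p :=
  fun x => tr p e (a * x.1.1 + b * x.1.2)

/-- The linear code `C_{D_i} = {(Tr(a x1 + b x2))_{(x1,x2) ∈ D_i} : a, b ∈ F_q}`. -/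
def code (p e l : ℕ) [Fact p.Prime] (i : ℕ) : Set (Dset p e l i → ZMod p) :=
  Set.range (fun ab : GaloisField p e × GaloisField p e => codeword p e l i ab.1 ab.2)

/-- The Hamming weight of a vector: the number of nonzero coordinates. -/
def wt {ι : Type*} {p : ℕ} (c : ι → ZMod p) : ℕ := Nat.card {x : ι // c x ≠ 0}

lemma geom_nat (x : ℕ) (hx : 1 ≤ x) (b : ℕ) :
    (x - 1) * ∑ i ∈ Finset.range b, x ^ i = x ^ b - 1 := by
  induction b with
  | zero => simp
  | succ b ih =>
    have h1 : 1 ≤ x ^ b := Nat.one_le_pow _ _ (by omega)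
    have h2 : 1 ≤ x ^ (b + 1) := Nat.one_le_pow _ _ (by omega)
    rw [Finset.sum_range_succ, Nat.mul_add, ih]
    have h3 : x ^ b ≤ x ^ (b+1) := Nat.pow_le_pow_right (by omega) (by omega)
    zify [h1, h2, hx]
    rw [pow_succ]
    ring

lemma sum_pow_odd_mod (x : ℕ) (hx : x % 2 = 1) (b : ℕ) :
    (∑ i ∈ Finset.range b, x ^ i) % 2 = b % 2 := by
  induction b with
  | zero => simp
  | succ b ih =>
    rw [Finset.sum_range_succ, Nat.add_mod, ih, Nat.pow_mod, hx]
    simp [Nat.add_mod]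

lemma parity_div (p t : ℕ) (hp : p % 2 = 1) (hp2 : 2 ≤ p) (ht : 0 < t) (b : ℕ) :
    (p ^ (t * b) - 1) / (p ^ t - 1) % 2 = b % 2 := by
  have hx : 2 ≤ p ^ t := le_trans hp2 (Nat.le_self_pow (by omega) p)
  have hxo : p ^ t % 2 = 1 := by
    rw [Nat.pow_mod, hp, one_pow]; rfl
    
  have := geom_nat (p ^ t) (by omega) b
  rw [← pow_mul] at this
  rw [← this, Nat.mul_div_cancel_left _ (by omega : 0 < p ^ t - 1)]
  exact sum_pow_odd_mod _ hxo b

lemma gcd_pow_sub_one (p : ℕ) (hp : 2 ≤ p) :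
    ∀ a, ∀ b, Nat.gcd (p ^ a - 1) (p ^ b - 1) = p ^ Nat.gcd a b - 1 := by
  intro a
  induction a using Nat.strong_induction_on with
  | _ a ih =>
    intro b
    rcases Nat.eq_zero_or_pos a with rfl | ha
    · simp
    have hble : b % a ≤ b := Nat.mod_le b a
    have hple : p ^ (b % a) ≤ p ^ b := Nat.pow_le_pow_right (by omega) hble
    have h1 : 1 ≤ p ^ (b % a) := Nat.one_le_pow _ _ (by omega)
    obtain ⟨k, hk⟩ : p ^ a - 1 ∣ p ^ b - p ^ (b % a) := by
      have hsplit : p ^ b = p ^ (b % a) * (p ^ a) ^ (b / a) := by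
        rw [← pow_mul, ← pow_add]
        congr 1
        exact (Nat.mod_add_div b a).symm
      have hd2 : p ^ a - 1 ∣ (p ^ a) ^ (b / a) - 1 := by
        simpa using Nat.sub_dvd_pow_sub_pow (p ^ a) 1 (b / a)
      have heq : p ^ (b % a) * (p ^ a) ^ (b / a) - p ^ (b % a)
          = p ^ (b % a) * ((p ^ a) ^ (b / a) - 1) := by
        rw [Nat.mul_sub, Nat.mul_one]
      rw [hsplit, heq]
      exact Dvd.dvd.mul_left hd2 _
    have split : p ^ b - 1 = (p ^ (b % a) - 1) + (p ^ a - 1) * k := by omega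
    rw [split, Nat.gcd_add_mul_left_right, Nat.gcd_comm (p ^ a - 1),
      ih (b % a) (Nat.mod_lt b ha) a, Nat.gcd_rec a b]

lemma cyclic_pow_iff {G : Type*} [Group G] [Fintype G] [IsCyclic G] (n : ℕ) (c : G) :
    (∃ x : G, x ^ n = c) ↔ c ^ (Fintype.card G / Nat.gcd n (Fintype.card G)) = 1 := by
  set N := Fintype.card G with hN
  set d := Nat.gcd n N with hd
  have hNpos : 0 < N := Fintype.card_pos
  have hdN : d ∣ N := Nat.gcd_dvd_right n N
  have hdn : d ∣ n := Nat.gcd_dvd_left n N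
  have hdpos : 0 < d := Nat.gcd_pos_of_pos_right n hNpos
  constructor
  · rintro ⟨x, rfl⟩
    obtain ⟨n', hn'⟩ := hdn
    have key : n * (N / d) = N * n' := by
      rw [hn', mul_comm d n', mul_assoc, mul_comm d, Nat.div_mul_cancel hdN, mul_comm n']
    rw [← pow_mul, key, pow_mul, pow_card_eq_one, one_pow]
  · intro hc
    obtain ⟨g, hg⟩ := IsCyclic.exists_generator (α := G)
    obtain ⟨k, hk⟩ := Submonoid.mem_powers_iff c g |>.1
      (mem_powers_iff_mem_zpowers.2 (hg c))
    have horder : orderOf g = N := by rw [orderOf_eq_card_of_forall_mem_zpowers hg, Nat.card_eq_fintype_card]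
    have hone : g ^ (k * (N / d)) = 1 := by rw [pow_mul, hk, hc]
    have hdvd : N ∣ k * (N / d) := by
      have := orderOf_dvd_of_pow_eq_one hone
      rwa [horder] at this
    have hdk : d ∣ k := by
      obtain ⟨N', hN'⟩ := hdN
      have hN'pos : 0 < N' := by
        rcases Nat.eq_zero_or_pos N' with rfl | h
        · rw [Nat.mul_zero] at hN'; omega
        · exact h
      have hq : N / d = N' := by rw [hN', Nat.mul_div_cancel_left _ hdpos]
      rw [hq, hN'] at hdvd
      exact (Nat.mul_dvd_mul_iff_right hN'pos).1 hdvd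
    obtain ⟨t, rfl⟩ := hdk
    refine ⟨g ^ (Nat.gcdA n N * t), ?_⟩
    have hbezout : (d : ℤ) = n * Nat.gcdA n N + N * Nat.gcdB n N := Nat.gcd_eq_gcd_ab n N
    have hgN : g ^ (N : ℤ) = 1 := by
      rw [zpow_natCast, ← horder, pow_orderOf_eq_one]
    calc (g ^ (Nat.gcdA n N * t)) ^ n = g ^ ((Nat.gcdA n N * t) * (n : ℤ)) := by
          rw [← zpow_natCast (g ^ (Nat.gcdA n N * t)) n, ← zpow_mul]
      _ = g ^ (((d : ℤ) - N * Nat.gcdB n N) * t) := by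
          congr 1; rw [hbezout]; ring
      _ = g ^ ((d * t : ℕ) : ℤ) * (g ^ (N : ℤ)) ^ (-(Nat.gcdB n N * t)) := by
          rw [← zpow_mul, ← zpow_add]; congr 1; push_cast; ring
      _ = c := by rw [hgN, one_zpow, mul_one, zpow_natCast, hk]

lemma perm_aux (p e l m s : ℕ) (hprime : p.Prime) (hp : Odd p)
    (hl : 0 < l) (hm : 1 ≤ m) (he : e = 2 * m) (hs : s = Nat.gcd l e)
    (K : Type*) [Field K] [Fintype K] [CharP K p] (hcard : Fintype.card K = p ^ e)
    (α : K) (hα : α ≠ 0) :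
    Function.Bijective
        (fun x : K => α ^ p ^ l * x ^ p ^ (2 * l) + α * x) ↔
      (Odd (e / s) ∨
        (Even (e / s) ∧
          α ^ ((p ^ e - 1) / (p ^ s + 1)) ≠ (-1 : K) ^ (m / s))) := by
  classical
  haveI : Fact p.Prime := ⟨hprime⟩
  have hp2 : 2 ≤ p := hprime.two_le
  have hpodd : p % 2 = 1 := Nat.odd_iff.1 hp
  have hp3 : 3 ≤ p := by
    rcases Nat.lt_or_ge p 3 with h | h
    · interval_cases p <;> simp_all
    · exact h
  haveI hf2p : Fact (2 < p) := ⟨by omega⟩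
  have he0 : e ≠ 0 := by omega
  have hcardu : Fintype.card Kˣ = p ^ e - 1 := by
    rw [Fintype.card_units, hcard]
  set f : K → K := fun x => α ^ p ^ l * x ^ p ^ (2 * l) + α * x with hf
  have hspos : 0 < s := by
    rw [hs]; exact Nat.gcd_pos_of_pos_left e hl
  have hsl : s ∣ l := hs ▸ Nat.gcd_dvd_left l e
  have hse : s ∣ e := hs ▸ Nat.gcd_dvd_right l e
  have hq1pos : 0 < p ^ e - 1 := by
    have : 2 ≤ p ^ e := le_trans hp2 (Nat.le_self_pow he0 p)
    omega
  set n : ℕ := p ^ (2 * l) - 1 with hn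
  have hpl1 : 1 ≤ p ^ l := Nat.one_le_pow _ _ (by omega)
  have hp2l1 : 1 ≤ p ^ (2 * l) := Nat.one_le_pow _ _ (by omega)
  -- Step A : bijective iff trivial kernel
  have hsub : ∀ x y : K, f (x - y) = f x - f y := by
    intro x y
    simp only [hf]
    rw [sub_pow_char_pow]
    ring
  have hbij : Function.Bijective f ↔ ¬ ∃ x : K, x ≠ 0 ∧ f x = 0 := by
    rw [Finite.injective_iff_bijective.symm]
    constructor
    · rintro hinj ⟨x, hx0, hfx⟩
      have h0 : f 0 = 0 := by
        simp [hf, zero_pow (show p ^ (2 * l) ≠ 0 by positivity)]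
      exact hx0 (hinj (by rw [hfx, h0]))
    · intro hker x y hxy
      by_contra hne
      exact hker ⟨x - y, sub_ne_zero.2 hne, by rw [hsub, hxy, sub_self]⟩
  -- units
  set a : Kˣ := Units.mk0 α hα with ha
  have haval : (a : K) = α := rfl
  set c : Kˣ := -(a * (a ^ p ^ l)⁻¹) with hc
  have hαpl : α ^ p ^ l ≠ 0 := pow_ne_zero _ hα
  have hcval : (c : K) = -(α * (α ^ p ^ l)⁻¹) := by
    simp [hc, ha]
  -- Step B : kernel elements correspond to solutions of u^n = c
  have hker : (∃ x : K, x ≠ 0 ∧ f x = 0) ↔ ∃ u : Kˣ, u ^ n = c := by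
    constructor
    · rintro ⟨x, hx0, hfx⟩
      refine ⟨Units.mk0 x hx0, ?_⟩
      rw [Units.ext_iff, Units.val_pow_eq_pow_val, hcval]
      have hxpow : x ^ p ^ (2 * l) = x ^ n * x := by
        rw [← pow_succ]; congr 1; omega
      have h2 : α ^ p ^ l * (x ^ n * x) + α * x = 0 := by
        rw [← hxpow]; exact hfx
      have h3 : (α ^ p ^ l * x ^ n + α) * x = 0 * x := by
        rw [zero_mul]; linear_combination h2
      have h4 : α ^ p ^ l * x ^ n + α = 0 := mul_right_cancel₀ hx0 h3
      show x ^ n = -(α * (α ^ p ^ l)⁻¹)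
      rw [show -(α * (α ^ p ^ l)⁻¹) = (-α) / (α ^ p ^ l) by ring,
        eq_div_iff hαpl]
      linear_combination h4
    · rintro ⟨u, hu⟩
      refine ⟨(u : K), u.ne_zero, ?_⟩
      have huval : ((u : K)) ^ n = -(α * (α ^ p ^ l)⁻¹) := by
        rw [← hcval, ← hu, Units.val_pow_eq_pow_val]
      have hxpow : (u : K) ^ p ^ (2 * l) = (u : K) ^ n * (u : K) := by
        rw [← pow_succ]; congr 1; omega
      have h4 : α ^ p ^ l * (u : K) ^ n = -α := by
        rw [huval]; field_simp
      show α ^ p ^ l * (u : K) ^ p ^ (2 * l) + α * (u : K) = 0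
      rw [hxpow]
      linear_combination (u : K) * h4
  -- Step C : solvability criterion
  have hgcd2 : Nat.gcd n (p ^ e - 1) = p ^ Nat.gcd (2 * l) e - 1 :=
    gcd_pow_sub_one p hp2 (2 * l) e
  have hcrit : (∃ u : Kˣ, u ^ n = c) ↔
      c ^ ((p ^ e - 1) / (p ^ Nat.gcd (2 * l) e - 1)) = 1 := by
    rw [cyclic_pow_iff n c, hcardu, hgcd2]
  -- helper : a ^ k = 1 whenever (p ^ e - 1) ∣ k
  have hapow1 : ∀ k : ℕ, (p ^ e - 1) ∣ k → a ^ k = 1 := by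
    rintro k ⟨t, rfl⟩
    rw [pow_mul, ← hcardu, pow_card_eq_one, one_pow]
  -- gcd(2l, e) is s or 2s
  have hg2s : Nat.gcd (2 * l) e ∣ 2 * s := by
    rw [hs, ← Nat.gcd_mul_left 2 l e]
    exact Nat.dvd_gcd (Nat.gcd_dvd_left _ _)
      ((Nat.gcd_dvd_right (2 * l) e).trans (dvd_mul_left e 2))
  have hsg2 : s ∣ Nat.gcd (2 * l) e :=
    Nat.dvd_gcd (hsl.trans (dvd_mul_left l 2)) hse
  have hcop : Nat.Coprime (l / s) (e / s) := by
    rw [hs]; exact Nat.coprime_div_gcd_div_gcd (hs ▸ hspos)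
  by_cases hodd : Odd (e / s)
  · -- e / s odd : the map is always bijective
    have hge : Nat.gcd (2 * l) e = s := by
      obtain ⟨k, hk⟩ := hsg2
      have hkd : s * k ∣ 2 * s := hk ▸ hg2s
      have hk2 : k ∣ 2 := by
        have := hkd
        rw [mul_comm 2 s] at this
        exact (Nat.mul_dvd_mul_iff_left hspos).1 this
      rcases (Nat.dvd_prime Nat.prime_two).1 hk2 with rfl | rfl
      · omega
      · exfalso
        have h2se : 2 * s ∣ e := by
          rw [show 2 * s = s * 2 by ring, ← hk]
          exact Nat.gcd_dvd_right (2 * l) e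
        obtain ⟨t, ht⟩ := h2se
        have : e / s = 2 * t := by
          rw [ht, show 2 * s * t = s * (2 * t) by ring,
            Nat.mul_div_cancel_left _ hspos]
        rw [this] at hodd
        exact (Nat.not_odd_iff_even.symm.1 ⟨t, by omega⟩) hodd
    set M : ℕ := (p ^ e - 1) / (p ^ s - 1) with hM
    have hps1 : p ^ s - 1 ∣ p ^ e - 1 := by
      have := Nat.sub_dvd_pow_sub_pow (p ^ s) 1 (e / s)
      rwa [one_pow, ← pow_mul, Nat.mul_div_cancel' hse] at this
    have hMmul : (p ^ s - 1) * M = p ^ e - 1 := Nat.mul_div_cancel' hps1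
    have hModd : M % 2 = 1 := by
      have := parity_div p s hpodd hp2 hspos (e / s)
      rw [Nat.mul_div_cancel' hse] at this
      rw [hM, this]
      exact Nat.odd_iff.1 hodd
    have hps1l : p ^ s - 1 ∣ p ^ l - 1 := by
      have := Nat.sub_dvd_pow_sub_pow (p ^ s) 1 (l / s)
      rwa [one_pow, ← pow_mul, Nat.mul_div_cancel' hsl] at this
    have hplM : a ^ (p ^ l * M) = a ^ M := by
      have hsub1 : (p ^ l - 1) * M = p ^ l * M - M := by rw [Nat.sub_mul, one_mul]
      have hle : M ≤ p ^ l * M := Nat.le_mul_of_pos_left M (by positivity)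
      have key : p ^ l * M = M + (p ^ l - 1) * M := by omega
      have hdvd1 : (p ^ e - 1) ∣ (p ^ l - 1) * M := by
        rw [← hMmul]; exact Nat.mul_dvd_mul_right hps1l M
      rw [key, pow_add, hapow1 _ hdvd1, mul_one]
    have hcM : c ^ M = -1 := by
      rw [hc, Odd.neg_pow (Nat.odd_iff.2 hModd), mul_pow, inv_pow, ← pow_mul,
        hplM, mul_inv_cancel]
    have hcM1 : c ^ M ≠ 1 := by
      rw [hcM, Ne, Units.ext_iff, Units.val_neg, Units.val_one]
      exact CharP.neg_one_ne_one K p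
    rw [hbij, hker, hcrit, hge]
    exact iff_of_true hcM1 (Or.inl hodd)

  · -- e / s even
    have heven : Even (e / s) := Nat.not_odd_iff_even.symm.2 hodd
    obtain ⟨t, ht⟩ := heven
    have hees : e = s * (e / s) := (Nat.mul_div_cancel' hse).symm
    have hest : e = 2 * s * t := by rw [hees, ht]; ring
    have htpos : 0 < t := by
      rcases Nat.eq_zero_or_pos t with rfl | h
      · omega
      · exact h
    have hmst : m = s * t := by
      have h2m : 2 * m = 2 * (s * t) := by rw [← he, hest]; ring
      omega
    have hms : m / s = t := by rw [hmst, Nat.mul_div_cancel_left _ hspos]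
    have he2s : e / (2 * s) = t := by
      rw [hest, Nat.mul_div_cancel_left _ (by omega : 0 < 2 * s)]
    have h2se : 2 * s ∣ e := ⟨t, hest⟩
    have hge : Nat.gcd (2 * l) e = 2 * s := by
      refine Nat.dvd_antisymm hg2s (Nat.dvd_gcd (mul_dvd_mul_left 2 hsl) h2se)
    have hlso : (l / s) % 2 = 1 := by
      rcases Nat.even_or_odd (l / s) with hev | hod
      · exfalso
        have h2 : 2 ∣ Nat.gcd (l / s) (e / s) :=
          Nat.dvd_gcd hev.two_dvd ⟨t, by omega⟩
        rw [hcop] at h2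
        omega
      · exact Nat.odd_iff.1 hod
    set M : ℕ := (p ^ e - 1) / (p ^ (2 * s) - 1) with hM
    have hps1 : p ^ (2 * s) - 1 ∣ p ^ e - 1 := by
      have := Nat.sub_dvd_pow_sub_pow (p ^ (2 * s)) 1 t
      rwa [one_pow, ← pow_mul, ← hest] at this
    have hMmul : (p ^ (2 * s) - 1) * M = p ^ e - 1 := Nat.mul_div_cancel' hps1
    have hMpar : M % 2 = t % 2 := by
      have := parity_div p (2 * s) hpodd hp2 (by omega) t
      rw [← hest] at this
      rw [hM, this]
    have hsle : s ≤ l := Nat.le_of_dvd hl hsl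
    have hlss : l = s * (l / s) := (Nat.mul_div_cancel' hsl).symm
    have hls2 : 2 * s ∣ l - s := by
      obtain ⟨u, hu⟩ : ∃ u, l / s = 2 * u + 1 := ⟨l / s / 2, by omega⟩
      refine ⟨u, ?_⟩
      rw [hlss, hu]
      have : s * (2 * u + 1) = 2 * s * u + s := by ring
      omega
    have hd' : p ^ (2 * s) - 1 ∣ p ^ (l - s) - 1 := by
      obtain ⟨u, hu⟩ := hls2
      have := Nat.sub_dvd_pow_sub_pow (p ^ (2 * s)) 1 u
      rwa [one_pow, ← pow_mul, ← hu] at this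
    have hplM : a ^ (p ^ l * M) = a ^ (p ^ s * M) := by
      have hls1 : 1 ≤ p ^ (l - s) := Nat.one_le_pow _ _ (by omega)
      have e2 : p ^ l * M = p ^ s * p ^ (l - s) * M := by
        rw [← pow_add]
        congr 2
        omega
      have e1 : p ^ s * (p ^ (l - s) - 1) * M = p ^ s * p ^ (l - s) * M - p ^ s * M := by
        rw [Nat.mul_sub, Nat.mul_one, Nat.sub_mul]
      have e3 : p ^ s * M ≤ p ^ s * p ^ (l - s) * M := by
        calc p ^ s * M = p ^ s * (1 * M) := by ring
          _ ≤ p ^ s * (p ^ (l - s) * M) :=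
              Nat.mul_le_mul_left _ (Nat.mul_le_mul_right M hls1)
          _ = p ^ s * p ^ (l - s) * M := by ring
      have key : p ^ l * M = p ^ s * M + p ^ s * (p ^ (l - s) - 1) * M := by omega
      have hdvd : (p ^ e - 1) ∣ p ^ s * (p ^ (l - s) - 1) * M := by
        rw [← hMmul, show p ^ s * (p ^ (l - s) - 1) * M
          = p ^ s * ((p ^ (l - s) - 1) * M) by ring]
        exact Dvd.dvd.mul_left (Nat.mul_dvd_mul_right hd' M) _
      rw [key, pow_add, hapow1 _ hdvd, mul_one]
    have hpsM : a ^ (p ^ s * M) = a ^ M * a ^ ((p ^ s - 1) * M) := by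
      rw [← pow_add]
      congr 1
      have h1 : (p ^ s - 1) * M = p ^ s * M - M := by rw [Nat.sub_mul, one_mul]
      have h2 : M ≤ p ^ s * M := Nat.le_mul_of_pos_left M (by positivity)
      omega
    have hcM : c ^ M = (-1 : Kˣ) ^ (m / s) * (a ^ ((p ^ s - 1) * M))⁻¹ := by
      rw [hc, neg_pow, mul_pow, inv_pow, ← pow_mul, hplM, hpsM, mul_inv]
      have hneg : (-1 : Kˣ) ^ M = (-1 : Kˣ) ^ (m / s) := by
        rw [hms]
        rcases Nat.even_or_odd t with hev | hod
        · rw [Even.neg_one_pow hev, Even.neg_one_pow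
            (Nat.even_iff.2 (by rw [hMpar]; exact Nat.even_iff.1 hev))]
        · rw [Odd.neg_one_pow hod, Odd.neg_one_pow
            (Nat.odd_iff.2 (by rw [hMpar]; exact Nat.odd_iff.1 hod))]
      have hgrp : a ^ M * ((a ^ M)⁻¹ * (a ^ ((p ^ s - 1) * M))⁻¹)
          = (a ^ ((p ^ s - 1) * M))⁻¹ := by group
      rw [hneg, hgrp]
    have hexp : (p ^ e - 1) / (p ^ s + 1) = (p ^ s - 1) * M := by
      have hP : 1 ≤ p ^ s := Nat.one_le_pow _ _ (by omega)
      have h2s : p ^ (2 * s) = p ^ s * p ^ s := by rw [two_mul, pow_add]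
      have hPP : (p ^ s + 1) * (p ^ s - 1) = p ^ (2 * s) - 1 := by
        rw [h2s]
        have hP2 : 1 ≤ p ^ s * p ^ s :=
          le_trans hP (Nat.le_mul_of_pos_left _ (by omega))
        zify [hP, hP2]
        ring
      refine Nat.div_eq_of_eq_mul_left (by positivity) ?_
      rw [show (p ^ s - 1) * M * (p ^ s + 1) = (p ^ s + 1) * (p ^ s - 1) * M by ring,
        hPP, hMmul]
    have hiff : c ^ M = 1 ↔ α ^ ((p ^ e - 1) / (p ^ s + 1)) = (-1 : K) ^ (m / s) := by
      rw [hcM, mul_inv_eq_one, eq_comm, Units.ext_iff, hexp]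
      push_cast
      simp [ha]
    rw [hbij, hker, hcrit, hge]
    have hns : ¬ Odd (e / s) := hodd
    constructor
    · intro h
      exact Or.inr ⟨⟨t, ht⟩, fun heq => h (hiff.2 heq)⟩
    · rintro (h | ⟨-, h⟩) hc1
      · exact hns h
      · exact h (hiff.1 hc1)

/-- `X ↦ α^{p^l} X^{p^{2l}} + α X` is a permutation polynomial of `F_q`
iff `e/s` is odd, or `e/s` is even and `α^{(q-1)/(p^s+1)} ≠ (-1)^{m/s}`. -/
theorem perm_iff (p e l m s : ℕ) [Fact p.Prime] (hp : Odd p)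
    (hl : 0 < l) (hm : 1 ≤ m) (he : e = 2 * m) (hs : s = Nat.gcd l e)
    (α : GaloisField p e) (hα : α ≠ 0) :
    Function.Bijective
        (fun x : GaloisField p e => α ^ p ^ l * x ^ p ^ (2 * l) + α * x) ↔
      (Odd (e / s) ∨
        (Even (e / s) ∧
          α ^ ((p ^ e - 1) / (p ^ s + 1)) ≠ (-1 : GaloisField p e) ^ (m / s))) := by
  letI : Fintype (GaloisField p e) := Fintype.ofFinite _
  have he0 : e ≠ 0 := by omega
  have hcard : Fintype.card (GaloisField p e) = p ^ e := by
    rw [← Nat.card_eq_fintype_card, GaloisField.card p e he0]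
  exact perm_aux p e l m s Fact.out hp hl hm he hs (GaloisField p e) hcard α hα

end
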